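/- If X is a set of n points in the moment curve with rapidly increasing parameters, the number of special r-partitions of {1, ..., (r-1)(d+1)+1} equals (r-1)!^d. -/

import Mathlib

/-- The k-th block M_k ⊆ [n] (0-indexed): the r consecutive integers
(r-1)k, ..., (r-1)k + (r-1); consecutive blocks share one element. -/
def tverbergBlock (d r : ℕ) (k : Fin (d + 1)) :
    Finset (Fin ((r - 1) * (d + 1) + 1)) :=
  Finset.univ.filter (fun i => (r - 1) * (k : ℕ) ≤ (i : ℕ) ∧
    (i : ℕ) ≤ (r - 1) * (k : ℕ) + (r - 1))

namespace TverAux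

open Finset Equiv

def topF (q : ℕ) : Fin (q + 1) := ⟨q, Nat.lt_succ_self q⟩

def bseq (q d : ℕ) (π : Fin d → Equiv.Perm (Fin (q + 1))) : ℕ → Equiv.Perm (Fin (q + 1))
  | 0 => 1
  | k + 1 => bseq q d π k * (if h : k < d then π ⟨k, h⟩ else Equiv.swap 0 (topF q))

def coloring (q d : ℕ) (hq : 0 < q) (π : Fin d → Equiv.Perm (Fin (q + 1)))
    (i : Fin (q * (d + 1) + 1)) : Fin (q + 1) :=
  bseq q d π ((i : ℕ) / q) ⟨(i : ℕ) % q, lt_of_lt_of_le (Nat.mod_lt _ hq) (Nat.le_succ q)⟩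

lemma coloring_apply (q d : ℕ) (hq : 0 < q) (π : Fin d → Equiv.Perm (Fin (q + 1)))
    (hπ : ∀ k, π k 0 = topF q) (k t : ℕ) (ht : t ≤ q)
    (hlt : q * k + t < q * (d + 1) + 1) :
    coloring q d hq π ⟨q * k + t, hlt⟩ = bseq q d π k ⟨t, by omega⟩ := by
  have e1 : coloring q d hq π ⟨q * k + t, hlt⟩ =
      bseq q d π ((q * k + t) / q) ⟨(q * k + t) % q,
        lt_of_lt_of_le (Nat.mod_lt _ hq) (Nat.le_succ q)⟩ := rfl
  rw [e1]
  rcases eq_or_lt_of_le ht with heq | ht'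
  · subst t
    have hdiv : (q * k + q) / q = k + 1 := by
      rw [show q * k + q = q * (k + 1) by ring, Nat.mul_div_cancel_left _ hq]
    have hmod : (q * k + q) % q = 0 := by
      rw [show q * k + q = q * (k + 1) by ring, Nat.mul_mod_right]
    simp only [hdiv, hmod]
    show bseq q d π (k + 1) ⟨0, _⟩ = _
    rw [bseq]
    have h0 : (⟨0, by omega⟩ : Fin (q + 1)) = 0 := rfl
    by_cases hk : k < d
    · simp only [dif_pos hk, Equiv.Perm.mul_apply, h0, hπ]
      rfl
    · simp only [dif_neg hk, Equiv.Perm.mul_apply, h0, Equiv.swap_apply_left]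
      rfl
  · have hdiv : (q * k + t) / q = k := by
      rw [Nat.mul_add_div hq, Nat.div_eq_of_lt ht', Nat.add_zero]
    have hmod : (q * k + t) % q = t := by
      rw [Nat.mul_add_mod, Nat.mod_eq_of_lt ht']
    simp only [hdiv, hmod]


lemma mem_block (q d : ℕ) (k : Fin (d + 1)) (i : Fin (q * (d + 1) + 1)) :
    i ∈ tverbergBlock d (q + 1) k ↔ q * (k : ℕ) ≤ (i : ℕ) ∧ (i : ℕ) ≤ q * (k : ℕ) + q := by
  simp [tverbergBlock]

lemma exists_rep (q d : ℕ) (hq : 0 < q) (i : Fin (q * (d + 1) + 1)) :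
    ∃ k t, k ≤ d ∧ t ≤ q ∧ (i : ℕ) = q * k + t := by
  by_cases h : (i : ℕ) ≤ q * d
  · refine ⟨(i : ℕ) / q, (i : ℕ) % q, ?_, le_of_lt (Nat.mod_lt _ hq), ?_⟩
    · calc (i : ℕ) / q ≤ q * d / q := Nat.div_le_div_right h
        _ = d := Nat.mul_div_cancel_left _ hq
    · exact (Nat.div_add_mod _ _).symm
  · have hi := i.isLt
    have hqd : q * (d + 1) = q * d + q := by ring
    exact ⟨d, (i : ℕ) - q * d, le_refl _, by omega, by omega⟩

def fiber (q d : ℕ) (c : Fin (q * (d + 1) + 1) → Fin (q + 1)) (j : Fin (q + 1)) :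
    Finset (Fin (q * (d + 1) + 1)) :=
  Finset.univ.filter (fun i => c i = j)

lemma mem_fiber (q d : ℕ) (c : Fin (q * (d + 1) + 1) → Fin (q + 1)) (j : Fin (q + 1))
    (i : Fin (q * (d + 1) + 1)) : i ∈ fiber q d c j ↔ c i = j := by
  simp [fiber]

def parts (q d : ℕ) (c : Fin (q * (d + 1) + 1) → Fin (q + 1)) :
    Finset (Finset (Fin (q * (d + 1) + 1))) :=
  Finset.image (fiber q d c) Finset.univ

-- the basepoint of color j : the element j of M_0
def base (q d : ℕ) (j : Fin (q + 1)) : Fin (q * (d + 1) + 1) :=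
  ⟨(j : ℕ), by have := j.isLt; have : q * 1 ≤ q * (d + 1) := Nat.mul_le_mul_left q (by omega); omega⟩

lemma coloring_base (q d : ℕ) (hq : 0 < q) (π : Fin d → Equiv.Perm (Fin (q + 1)))
    (hπ : ∀ k, π k 0 = topF q) (j : Fin (q + 1)) :
    coloring q d hq π (base q d j) = j := by
  have hj : (j : ℕ) ≤ q := by have := j.isLt; omega
  have hlt : q * 0 + (j : ℕ) < q * (d + 1) + 1 := by
    simpa [base] using (base q d j).isLt
  have : base q d j = ⟨q * 0 + (j : ℕ), hlt⟩ := by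
    apply Fin.ext; simp [base]
  rw [this, coloring_apply q d hq π hπ 0 j hj hlt]
  rfl

lemma coloring_fiber_eq_iff (q d : ℕ) (hq : 0 < q) (π π' : Fin d → Equiv.Perm (Fin (q + 1)))
    (hπ : ∀ k, π k 0 = topF q) (hπ' : ∀ k, π' k 0 = topF q)
    (h : parts q d (coloring q d hq π) = parts q d (coloring q d hq π')) :
    coloring q d hq π = coloring q d hq π' := by
  set c := coloring q d hq π with hc
  set c' := coloring q d hq π' with hc'
  have hfib : ∀ j, fiber q d c j = fiber q d c' j := by
    intro j
    have h1 : fiber q d c j ∈ parts q d c' := by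
      rw [← h]; exact Finset.mem_image_of_mem _ (Finset.mem_univ j)
    obtain ⟨l, _, hl⟩ := Finset.mem_image.mp h1
    have hbase : base q d j ∈ fiber q d c j := by
      rw [mem_fiber]; exact coloring_base q d hq π hπ j
    have hbase' : base q d j ∈ fiber q d c' l := by rw [hl]; exact hbase
    have : c' (base q d j) = l := (mem_fiber _ _ _ _ _).mp hbase'
    have hjl : j = l := by rw [← this]; exact (coloring_base q d hq π' hπ' j).symm
    rw [← hl, hjl]
  funext i
  have : i ∈ fiber q d c (c i) := by rw [mem_fiber]
  rw [hfib (c i), mem_fiber] at this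
  exact this.symm


lemma coloring_apply' (q d : ℕ) (hq : 0 < q) (π : Fin d → Equiv.Perm (Fin (q + 1)))
    (hπ : ∀ k, π k 0 = topF q) (k t : ℕ) (hk : k ≤ d) (ht : t ≤ q)
    (i : Fin (q * (d + 1) + 1)) (hi : (i : ℕ) = q * k + t) :
    coloring q d hq π i = bseq q d π k ⟨t, by omega⟩ := by
  have hlt : q * k + t < q * (d + 1) + 1 := hi ▸ i.isLt
  have hik : i = ⟨q * k + t, hlt⟩ := Fin.ext hi
  subst hik
  exact coloring_apply q d hq π hπ k t ht hlt

lemma fiber_injective (q d : ℕ) (hq : 0 < q) (π : Fin d → Equiv.Perm (Fin (q + 1)))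
    (hπ : ∀ k, π k 0 = topF q) :
    Function.Injective (fiber q d (coloring q d hq π)) := by
  intro j j' h
  have h1 : base q d j ∈ fiber q d (coloring q d hq π) j := by
    rw [mem_fiber]; exact coloring_base q d hq π hπ j
  rw [h, mem_fiber] at h1
  rw [← h1, coloring_base q d hq π hπ j]

lemma fiber_inter_block (q d : ℕ) (hq : 0 < q) (π : Fin d → Equiv.Perm (Fin (q + 1)))
    (hπ : ∀ k, π k 0 = topF q) (j : Fin (q + 1)) (k : Fin (d + 1)) :
    (fiber q d (coloring q d hq π) j ∩ tverbergBlock d (q + 1) k).card = 1 := by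
  have hk : (k : ℕ) ≤ d := by have := k.isLt; omega
  set b := bseq q d π (k : ℕ) with hb
  set s : ℕ := ((b⁻¹ j : Fin (q + 1)) : ℕ) with hs'
  have hs : s ≤ q := by have := (b⁻¹ j).isLt; omega
  have hlt : q * (k : ℕ) + s < q * (d + 1) + 1 := by
    have h1 : q * (k : ℕ) + s ≤ q * d + q := by
      have := Nat.mul_le_mul_left q hk; omega
    have h2 : q * (d + 1) = q * d + q := by ring
    omega
  rw [Finset.card_eq_one]
  refine ⟨⟨q * (k : ℕ) + s, hlt⟩, ?_⟩
  rw [Finset.eq_singleton_iff_unique_mem]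
  constructor
  · rw [Finset.mem_inter, mem_fiber, mem_block]
    have hvv : ((⟨q * (k : ℕ) + s, hlt⟩ : Fin (q * (d + 1) + 1)) : ℕ) = q * (k : ℕ) + s := rfl
    refine ⟨?_, by rw [hvv]; omega, by rw [hvv]; omega⟩
    rw [coloring_apply' q d hq π hπ (k : ℕ) s hk hs _ rfl]
    have : (⟨s, by omega⟩ : Fin (q + 1)) = b⁻¹ j := Fin.ext rfl
    rw [this]
    exact b.apply_symm_apply j
  · intro i hi
    rw [Finset.mem_inter, mem_fiber, mem_block] at hi
    obtain ⟨hc, h1, h2⟩ := hi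
    have ht : (i : ℕ) - q * (k : ℕ) ≤ q ∧ (i : ℕ) = q * (k : ℕ) + ((i : ℕ) - q * (k : ℕ)) := by
      omega
    have hci := coloring_apply' q d hq π hπ (k : ℕ) _ hk ht.1 i ht.2
    rw [hc] at hci
    have : b⁻¹ j = ⟨(i : ℕ) - q * (k : ℕ), by omega⟩ := by
      rw [hci, Equiv.Perm.inv_def, Equiv.symm_apply_apply]
    have hval : s = (i : ℕ) - q * (k : ℕ) := congrArg Fin.val this
    apply Fin.ext
    show (i : ℕ) = q * (k : ℕ) + s
    omega


lemma fiber_injective' (q d : ℕ) (c : Fin (q * (d + 1) + 1) → Fin (q + 1))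
    (hbase : ∀ j, c (base q d j) = j) :
    Function.Injective (fiber q d c) := by
  intro j j' h
  have h1 : base q d j ∈ fiber q d c j := by rw [mem_fiber]; exact hbase j
  rw [h, mem_fiber] at h1
  rw [← h1, hbase j]

lemma parts_card (q d : ℕ) (c : Fin (q * (d + 1) + 1) → Fin (q + 1))
    (hbase : ∀ j, c (base q d j) = j) : (parts q d c).card = q + 1 := by
  rw [parts, Finset.card_image_of_injective _ (fiber_injective' q d c hbase),
    Finset.card_univ, Fintype.card_fin]

lemma parts_disjoint (q d : ℕ) (c : Fin (q * (d + 1) + 1) → Fin (q + 1)) :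
    ∀ I ∈ parts q d c, ∀ J ∈ parts q d c, I ≠ J → Disjoint I J := by
  intro I hI J hJ hne
  obtain ⟨j, _, rfl⟩ := Finset.mem_image.mp hI
  obtain ⟨j', _, rfl⟩ := Finset.mem_image.mp hJ
  rw [Finset.disjoint_left]
  intro i hi hi'
  rw [mem_fiber] at hi hi'
  exact hne (by rw [← hi, ← hi'])

lemma parts_cover (q d : ℕ) (c : Fin (q * (d + 1) + 1) → Fin (q + 1)) :
    ∀ i, ∃ I ∈ parts q d c, i ∈ I :=
  fun i => ⟨fiber q d c (c i), Finset.mem_image_of_mem _ (Finset.mem_univ _),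
    (mem_fiber _ _ _ _ _).mpr rfl⟩

/-- The forward map: from constrained permutation sequences to special partitions. -/
def Phi (q d : ℕ) (hq : 0 < q)
    (π : {π : Fin d → Equiv.Perm (Fin (q + 1)) // ∀ k, π k 0 = topF q}) :
    {P : Finset (Finset (Fin (q * (d + 1) + 1))) //
      P.card = q + 1 ∧
      (∀ I ∈ P, ∀ J ∈ P, I ≠ J → Disjoint I J) ∧
      (∀ i : Fin (q * (d + 1) + 1), ∃ I ∈ P, i ∈ I) ∧
      (∀ I ∈ P, ∀ k : Fin (d + 1), (I ∩ tverbergBlock d (q + 1) k).card = 1)} :=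
  ⟨parts q d (coloring q d hq π.1),
    parts_card q d _ (coloring_base q d hq π.1 π.2),
    parts_disjoint q d _,
    parts_cover q d _,
    by
      intro I hI k
      obtain ⟨j, _, rfl⟩ := Finset.mem_image.mp hI
      exact fiber_inter_block q d hq π.1 π.2 j k⟩

lemma Phi_injective (q d : ℕ) (hq : 0 < q) : Function.Injective (Phi q d hq) := by
  rintro ⟨π, hπ⟩ ⟨π', hπ'⟩ h
  have hparts : parts q d (coloring q d hq π) = parts q d (coloring q d hq π') :=
    congrArg Subtype.val h
  have hcol : coloring q d hq π = coloring q d hq π' :=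
    coloring_fiber_eq_iff q d hq π π' hπ hπ' hparts
  have hbseq : ∀ k, k ≤ d → bseq q d π k = bseq q d π' k := by
    intro k hk
    apply Equiv.ext
    intro t
    have ht : (t : ℕ) ≤ q := by have := t.isLt; omega
    have hlt : q * k + (t : ℕ) < q * (d + 1) + 1 := by
      have := Nat.mul_le_mul_left q hk
      have h2 : q * (d + 1) = q * d + q := by ring
      omega
    have e1 := coloring_apply q d hq π hπ k (t : ℕ) ht hlt
    have e2 := coloring_apply q d hq π' hπ' k (t : ℕ) ht hlt
    rw [hcol] at e1
    have : bseq q d π k ⟨(t : ℕ), by omega⟩ = bseq q d π' k ⟨(t : ℕ), by omega⟩ :=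
      by rw [← e1, ← e2]
    simpa [Fin.eta] using this
  apply Subtype.ext
  funext k
  have h1 : bseq q d π ((k : ℕ) + 1) = bseq q d π' ((k : ℕ) + 1) :=
    hbseq _ (by have := k.isLt; omega)
  rw [bseq, bseq, dif_pos k.isLt] at h1
  have h2 : bseq q d π (k : ℕ) = bseq q d π' (k : ℕ) := hbseq _ (by have := k.isLt; omega)
  rw [h2] at h1
  have := mul_left_cancel h1
  simpa [Fin.eta] using this


lemma Phi_surjective (q d : ℕ) (hq : 0 < q) : Function.Surjective (Phi q d hq) := by
  classical
  intro b
  obtain ⟨P, hb⟩ := b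
  have hcard := hb.1
  have hdisj := hb.2.1
  have hblk := hb.2.2.2
  choose part hpartP hpart using hb.2.2.1
  have part_unique : ∀ I ∈ P, ∀ i, i ∈ I → I = part i := by
    intro I hI i hiI
    by_contra hne
    exact Finset.disjoint_left.mp (hdisj I hI (part i) (hpartP i) hne) hiI (hpart i)
  have hM0 : ∀ i, ∃ a, part i ∩ tverbergBlock d (q + 1) 0 = {a} :=
    fun i => Finset.card_eq_one.mp (hblk _ (hpartP i) 0)
  choose aelt ha using hM0
  have ha_mem : ∀ i, aelt i ∈ part i ∩ tverbergBlock d (q + 1) 0 := by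
    intro i; rw [ha i]; exact Finset.mem_singleton_self _
  have ha_le : ∀ i, (aelt i : ℕ) ≤ q := by
    intro i
    have h2 := (Finset.mem_inter.mp (ha_mem i)).2
    rw [mem_block] at h2
    have h0 : ((0 : Fin (d + 1)) : ℕ) = 0 := rfl
    rw [h0] at h2
    omega
  set col : Fin (q * (d + 1) + 1) → Fin (q + 1) :=
    fun i => ⟨(aelt i : ℕ), by have := ha_le i; omega⟩ with hcoldef
  have part_eq_aelt : ∀ i i', part i = part i' → aelt i = aelt i' := by
    intro i i' hpp
    have h2 := ha i'
    rw [← hpp, ha i] at h2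
    exact Finset.singleton_injective h2
  have col_eq_part : ∀ i i', col i = col i' → part i = part i' := by
    intro i i' hcc
    have hvv : ((col i : Fin (q + 1)) : ℕ) = ((col i' : Fin (q + 1)) : ℕ) := congrArg Fin.val hcc
    have hae : aelt i = aelt i' := Fin.ext hvv
    have h1 : aelt i ∈ part i := (Finset.mem_inter.mp (ha_mem i)).1
    have h2 : aelt i ∈ part i' := hae ▸ (Finset.mem_inter.mp (ha_mem i')).1
    calc part i = part (aelt i) := part_unique _ (hpartP i) _ h1
      _ = part i' := (part_unique _ (hpartP i') _ h2).symm
  have aelt_base : ∀ (i : Fin (q * (d + 1) + 1)), (i : ℕ) ≤ q → aelt i = i := by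
    intro i hi
    have hmem : i ∈ part i ∩ tverbergBlock d (q + 1) 0 := by
      rw [Finset.mem_inter, mem_block]
      have h0 : ((0 : Fin (d + 1)) : ℕ) = 0 := rfl
      rw [h0]
      exact ⟨hpart i, by omega, by omega⟩
    rw [ha i, Finset.mem_singleton] at hmem
    exact hmem.symm
  have col_pt : ∀ (i : Fin (q * (d + 1) + 1)) (h : (i : ℕ) ≤ q),
      col i = ⟨(i : ℕ), by omega⟩ := by
    intro i h
    apply Fin.ext
    show ((aelt i : ℕ)) = (i : ℕ)
    rw [aelt_base i h]
  have col_base : ∀ j, col (base q d j) = j := by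
    intro j
    have hj : ((base q d j : Fin (q * (d + 1) + 1)) : ℕ) ≤ q := by
      have := j.isLt
      show (j : ℕ) ≤ q
      omega
    rw [col_pt _ hj]
    apply Fin.ext
    rfl
  have hptlt : ∀ k t : ℕ, k ≤ d → t ≤ q → q * k + t < q * (d + 1) + 1 := by
    intro k t hk ht
    have := Nat.mul_le_mul_left q hk
    have h2 : q * (d + 1) = q * d + q := by ring
    omega
  set f : ℕ → Fin (q + 1) → Fin (q + 1) :=
    fun k t => col ⟨q * (min k d) + (t : ℕ),
      hptlt _ _ (Nat.min_le_right _ _) (by have := t.isLt; omega)⟩ with hfdef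
  have f_inj : ∀ k, Function.Injective (f k) := by
    intro k t t' h
    have hKd : min k d ≤ d := Nat.min_le_right _ _
    set i1 : Fin (q * (d + 1) + 1) :=
      ⟨q * min k d + (t : ℕ), hptlt _ _ hKd (by have := t.isLt; omega)⟩ with hi1
    set i2 : Fin (q * (d + 1) + 1) :=
      ⟨q * min k d + (t' : ℕ), hptlt _ _ hKd (by have := t'.isLt; omega)⟩ with hi2
    have hpp : part i1 = part i2 := col_eq_part _ _ h
    have hm1 : i1 ∈ part i1 ∩ tverbergBlock d (q + 1) ⟨min k d, by omega⟩ := by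
      rw [Finset.mem_inter, mem_block]
      have hv : (i1 : ℕ) = q * min k d + (t : ℕ) := rfl
      have hk' : ((⟨min k d, by omega⟩ : Fin (d + 1)) : ℕ) = min k d := rfl
      rw [hv, hk']
      exact ⟨hpart i1, by omega, by have := t.isLt; omega⟩
    have hm2 : i2 ∈ part i1 ∩ tverbergBlock d (q + 1) ⟨min k d, by omega⟩ := by
      rw [Finset.mem_inter, mem_block]
      have hv : (i2 : ℕ) = q * min k d + (t' : ℕ) := rfl
      have hk' : ((⟨min k d, by omega⟩ : Fin (d + 1)) : ℕ) = min k d := rfl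
      rw [hv, hk']
      refine ⟨?_, by omega, by have := t'.isLt; omega⟩
      rw [hpp]; exact hpart i2
    obtain ⟨x, hx⟩ := Finset.card_eq_one.mp (hblk _ (hpartP i1) ⟨min k d, by omega⟩)
    rw [hx, Finset.mem_singleton] at hm1 hm2
    have h12 : i1 = i2 := hm1.trans hm2.symm
    have hval : q * min k d + (t : ℕ) = q * min k d + (t' : ℕ) := congrArg Fin.val h12
    exact Fin.ext (by omega)
  have f_bij : ∀ k, Function.Bijective (f k) :=
    fun k => Finite.injective_iff_bijective.mp (f_inj k)
  set bp : ℕ → Equiv.Perm (Fin (q + 1)) := fun k => Equiv.ofBijective _ (f_bij k) with hbpdef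
  have bp_apply : ∀ k (t : Fin (q + 1)),
      bp k t = col ⟨q * (min k d) + (t : ℕ),
        hptlt _ _ (Nat.min_le_right _ _) (by have := t.isLt; omega)⟩ :=
    fun _ _ => rfl
  have bp_zero : bp 0 = 1 := by
    apply Equiv.ext
    intro t
    rw [bp_apply]
    have hle : ((⟨q * min 0 d + (t : ℕ), hptlt _ _ (Nat.min_le_right _ _)
        (by have := t.isLt; omega)⟩ : Fin (q * (d + 1) + 1)) : ℕ) ≤ q := by
      show q * min 0 d + (t : ℕ) ≤ q
      rw [Nat.zero_min, Nat.mul_zero]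
      have := t.isLt; omega
    rw [col_pt _ hle]
    apply Fin.ext
    show q * min 0 d + (t : ℕ) = (t : ℕ)
    rw [Nat.zero_min, Nat.mul_zero, Nat.zero_add]
  have bp_chain : ∀ k : ℕ, k < d → bp (k + 1) 0 = bp k (topF q) := by
    intro k hk
    rw [bp_apply, bp_apply]
    congr 1
    apply Fin.ext
    show q * min (k + 1) d + ((0 : Fin (q + 1)) : ℕ) = q * min k d + ((topF q : Fin (q + 1)) : ℕ)
    have h0 : ((0 : Fin (q + 1)) : ℕ) = 0 := rfl
    have h1 : ((topF q : Fin (q + 1)) : ℕ) = q := rfl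
    rw [h0, h1]
    have e1 : min (k + 1) d = k + 1 := by omega
    have e2 : min k d = k := by omega
    rw [e1, e2]; ring
  set πs : Fin d → Equiv.Perm (Fin (q + 1)) :=
    fun k => (bp (k : ℕ))⁻¹ * bp ((k : ℕ) + 1) with hπsdef
  have hπs : ∀ k, πs k 0 = topF q := by
    intro k
    show ((bp (k : ℕ))⁻¹ * bp ((k : ℕ) + 1)) 0 = topF q
    rw [Equiv.Perm.mul_apply, bp_chain (k : ℕ) k.isLt, Equiv.Perm.inv_def, Equiv.symm_apply_apply]
  have bseq_eq : ∀ k, k ≤ d → bseq q d πs k = bp k := by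
    intro k
    induction k with
    | zero => intro _; rw [bp_zero]; rfl
    | succ k ih =>
      intro hk1
      have hk : k < d := by omega
      rw [bseq, dif_pos hk, ih (by omega)]
      show bp k * ((bp k)⁻¹ * bp (k + 1)) = bp (k + 1)
      group
  have hcoloring : coloring q d hq πs = col := by
    funext i
    obtain ⟨k, t, hk, ht, hi⟩ := exists_rep q d hq i
    rw [coloring_apply' q d hq πs hπs k t hk ht i hi, bseq_eq k hk, bp_apply]
    congr 1
    apply Fin.ext
    show q * min k d + ((⟨t, by omega⟩ : Fin (q + 1)) : ℕ) = (i : ℕ)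
    have hv : ((⟨t, by omega⟩ : Fin (q + 1)) : ℕ) = t := rfl
    rw [hv, min_eq_left hk]
    omega
  have fiber_part : ∀ j, fiber q d col j = part (base q d j) := by
    intro j
    ext i
    rw [mem_fiber]
    constructor
    · intro hij
      have hcc : col i = col (base q d j) := by rw [hij, col_base]
      rw [← col_eq_part _ _ hcc]
      exact hpart i
    · intro hi
      have h1 : part (base q d j) = part i := part_unique _ (hpartP (base q d j)) i hi
      have hae : aelt i = aelt (base q d j) := part_eq_aelt i (base q d j) h1.symm
      have hvv : ((aelt i : Fin (q * (d + 1) + 1)) : ℕ) = (aelt (base q d j) : ℕ) :=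
        congrArg Fin.val hae
      have hcc : col i = col (base q d j) := Fin.ext hvv
      rw [hcc, col_base]
  have hsub : parts q d col ⊆ P := by
    intro I hI
    obtain ⟨j, _, rfl⟩ := Finset.mem_image.mp hI
    rw [fiber_part]
    exact hpartP _
  have hPeq : parts q d col = P := by
    apply Finset.eq_of_subset_of_card_le hsub
    rw [hcard, parts_card q d col col_base]
  refine ⟨⟨πs, hπs⟩, Subtype.ext ?_⟩
  show parts q d (coloring q d hq πs) = P
  rw [hcoloring, hPeq]


def fixEquiv (q : ℕ) : {σ : Equiv.Perm (Fin (q + 1)) // σ 0 = topF q} ≃ Equiv.Perm (Fin q) where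
  toFun σ := (Equiv.Perm.decomposeFin σ.1).2
  invFun e := ⟨Equiv.Perm.decomposeFin.symm (topF q, e),
    Equiv.Perm.decomposeFin_symm_apply_zero _ _⟩
  left_inv := by
    rintro ⟨σ, hσ⟩
    apply Subtype.ext
    show Equiv.Perm.decomposeFin.symm (topF q, (Equiv.Perm.decomposeFin σ).2) = σ
    have h1 := Equiv.Perm.decomposeFin_symm_apply_zero
      (Equiv.Perm.decomposeFin σ).1 (Equiv.Perm.decomposeFin σ).2
    rw [Prod.mk.eta, Equiv.symm_apply_apply] at h1
    rw [← hσ, h1, Prod.mk.eta, Equiv.symm_apply_apply]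
  right_inv := by
    intro e
    show (Equiv.Perm.decomposeFin (Equiv.Perm.decomposeFin.symm (topF q, e))).2 = e
    rw [Equiv.apply_symm_apply]

theorem aux (q d : ℕ) (hq : 0 < q) :
    Nat.card {P : Finset (Finset (Fin (q * (d + 1) + 1))) //
      P.card = q + 1 ∧
      (∀ I ∈ P, ∀ J ∈ P, I ≠ J → Disjoint I J) ∧
      (∀ i : Fin (q * (d + 1) + 1), ∃ I ∈ P, i ∈ I) ∧
      (∀ I ∈ P, ∀ k : Fin (d + 1), (I ∩ tverbergBlock d (q + 1) k).card = 1)} =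
    q.factorial ^ d := by
  have e1 : {π : Fin d → Equiv.Perm (Fin (q + 1)) // ∀ k, π k 0 = topF q} ≃
      {P : Finset (Finset (Fin (q * (d + 1) + 1))) //
        P.card = q + 1 ∧
        (∀ I ∈ P, ∀ J ∈ P, I ≠ J → Disjoint I J) ∧
        (∀ i : Fin (q * (d + 1) + 1), ∃ I ∈ P, i ∈ I) ∧
        (∀ I ∈ P, ∀ k : Fin (d + 1), (I ∩ tverbergBlock d (q + 1) k).card = 1)} :=
    Equiv.ofBijective (Phi q d hq) ⟨Phi_injective q d hq, Phi_surjective q d hq⟩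
  have e2 : {π : Fin d → Equiv.Perm (Fin (q + 1)) // ∀ k, π k 0 = topF q} ≃
      (Fin d → Equiv.Perm (Fin q)) :=
    (Equiv.subtypePiEquivPi).trans (Equiv.piCongrRight fun _ => fixEquiv q)
  rw [← Nat.card_congr e1, Nat.card_congr e2, Nat.card_eq_fintype_card,
    Fintype.card_fun, Fintype.card_perm, Fintype.card_fin, Fintype.card_fin]

end TverAux

/-- The number of special r-partitions of [n], n = (r-1)(d+1)+1, i.e. (unordered)
partitions of [n] into r parts each meeting every block M_k in exactly one element,
equals ((r-1)!)^d. -/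
theorem card_special_partitions (d r : ℕ) (hd : 1 ≤ d) (hr : 2 ≤ r) :
    Nat.card {P : Finset (Finset (Fin ((r - 1) * (d + 1) + 1))) //
      P.card = r ∧
      (∀ I ∈ P, ∀ J ∈ P, I ≠ J → Disjoint I J) ∧
      (∀ i : Fin ((r - 1) * (d + 1) + 1), ∃ I ∈ P, i ∈ I) ∧
      (∀ I ∈ P, ∀ k : Fin (d + 1), (I ∩ tverbergBlock d r k).card = 1)} =
    (r - 1).factorial ^ d := by
  obtain ⟨q, rfl⟩ : ∃ q, r = q + 1 := ⟨r - 1, by omega⟩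
  have hq : 0 < q := by omega
  exact TverAux.aux q d hq
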